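/- A group Γ is Jordan if there exists a constant C such that every finite subgroup G of Γ contains an abelian subgroup A with index [G : A] ≤ C. If a group Γ contains, for every positive integer n, a subgroup isomorphic to the Heisenberg group Γ_n (mod n Heisenberg group), then Γ is not Jordan. -/

import Mathlib

/-- The mod-`n` Heisenberg group, as triples `(a, b, c)` of elements of `ZMod n`,
where `(a,b,c)` corresponds to the unipotent upper triangular matrix
`![![1, a, c], ![0, 1, b], ![0, 0, 1]]`. -/
def Heisenberg (n : ℕ) : Type := ZMod n × ZMod n × ZMod n

namespace Heisenberg

variable {n : ℕ}

instance : Mul (Heisenberg n) :=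
  ⟨fun x y => (x.1 + y.1, x.2.1 + y.2.1, x.2.2 + y.2.2 + x.1 * y.2.1)⟩

instance : One (Heisenberg n) := ⟨((0 : ZMod n), (0 : ZMod n), (0 : ZMod n))⟩

instance : Inv (Heisenberg n) := ⟨fun x => (-x.1, -x.2.1, -x.2.2 + x.1 * x.2.1)⟩

lemma mul_def (x y : Heisenberg n) :
    x * y = (x.1 + y.1, x.2.1 + y.2.1, x.2.2 + y.2.2 + x.1 * y.2.1) := rfl

lemma one_def : (1 : Heisenberg n) = ((0 : ZMod n), (0 : ZMod n), (0 : ZMod n)) := rfl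

lemma inv_def (x : Heisenberg n) :
    x⁻¹ = (-x.1, -x.2.1, -x.2.2 + x.1 * x.2.1) := rfl

instance : Group (Heisenberg n) where
  mul_assoc a b c := by
    rw [mul_def, mul_def, mul_def, mul_def]
    refine Prod.ext ?_ (Prod.ext ?_ ?_) <;> dsimp <;> ring
  one_mul a := by
    rw [mul_def, one_def]
    refine Prod.ext ?_ (Prod.ext ?_ ?_) <;> dsimp <;> ring
  mul_one a := by
    rw [mul_def, one_def]
    refine Prod.ext ?_ (Prod.ext ?_ ?_) <;> dsimp <;> ring
  inv_mul_cancel a := by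
    rw [mul_def, inv_def, one_def]
    refine Prod.ext ?_ (Prod.ext ?_ ?_) <;> dsimp <;> ring

end Heisenberg

/-- A group `Γ` is Jordan if there is a constant `C > 0` such that every finite subgroup
`G ≤ Γ` has an abelian subgroup `A ≤ G` of index at most `C`. -/
def JordanGroup (Γ : Type*) [Group Γ] : Prop :=
  ∃ C : ℕ, 0 < C ∧ ∀ G : Subgroup Γ, Finite G →
    ∃ A : Subgroup G, (∀ x ∈ A, ∀ y ∈ A, x * y = y * x) ∧ A.index ≤ C

/-- A group containing, for every `n ≥ 1`, a subgroup isomorphic to the mod-`n`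
Heisenberg group is not Jordan. -/
theorem not_isJordan_of_heisenberg_subgroups (Γ : Type*) [Group Γ]
    (h : ∀ n : ℕ, 1 ≤ n → ∃ H : Subgroup Γ, Nonempty (H ≃* Heisenberg n)) :
    ¬ JordanGroup Γ := by
  rintro ⟨C, hC, hJ⟩
  obtain ⟨p, hpC, hp⟩ := Nat.exists_infinite_primes (C + 1)
  haveI : Fact p.Prime := ⟨hp⟩
  haveI : NeZero p := ⟨hp.ne_zero⟩
  obtain ⟨H, ⟨e⟩⟩ := h p hp.one_lt.le
  haveI : Finite (Heisenberg p) := by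
    show Finite (ZMod p × ZMod p × ZMod p); infer_instance
  haveI : Finite H := Finite.of_equiv _ e.symm.toEquiv
  obtain ⟨A, hA, hAidx⟩ := hJ H inferInstance
  set B : Subgroup (Heisenberg p) := A.map e.toMonoidHom with hB
  have hBidx : B.index = A.index :=
    Subgroup.index_map_eq A e.surjective (by rw [(MonoidHom.ker_eq_bot_iff e.toMonoidHom).mpr e.injective]; exact bot_le)
  have hcard : Nat.card (Heisenberg p) = p ^ 3 := by
    show Nat.card (ZMod p × ZMod p × ZMod p) = p ^ 3
    simp [Nat.card_prod, ZMod.card]; ring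
  have hdvd : B.index ∣ p ^ 3 := hcard ▸ B.index_dvd_card
  obtain ⟨k, hk, hkeq⟩ := (Nat.dvd_prime_pow hp).mp hdvd
  have hB1 : B.index = 1 := by
    rcases Nat.eq_zero_or_pos k with rfl | hkpos
    · simpa using hkeq
    · exfalso
      have : p ≤ B.index := hkeq ▸ Nat.le_self_pow (by omega) p
      have : B.index ≤ C := hBidx ▸ hAidx
      omega
  have hBtop : B = ⊤ := Subgroup.index_eq_one.mp hB1
  -- B = ⊤ is abelian, but Heisenberg p is not
  have hcomm : ∀ x y : Heisenberg p, x * y = y * x := by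
    intro x y
    have hx : x ∈ B := hBtop ▸ Subgroup.mem_top x
    have hy : y ∈ B := hBtop ▸ Subgroup.mem_top y
    obtain ⟨a, ha, rfl⟩ := hx
    obtain ⟨b, hb, rfl⟩ := hy
    rw [← map_mul, ← map_mul, hA a ha b hb]
  have := hcomm ((1 : ZMod p), (0 : ZMod p), (0 : ZMod p))
      ((0 : ZMod p), (1 : ZMod p), (0 : ZMod p))
  have h3 := congrArg (fun z : Heisenberg p => z.2.2) this
  change (0 : ZMod p) + 0 + 1 * 1 = 0 + 0 + 0 * 0 at h3
  simp at h3
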